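/- Let s ∈ ℂ ∖ (−∞,0] and set ω := Re(s^{1/2}) > 0. For every Schwartz function z : ℝ³ → ℂ, setting g := −Δz + s·z, the full second-derivative (H² semi-norm) bound Σ_{i,j=1}^{3} ‖∂_i∂_j z‖²_{L²(ℝ³)} ≤ 4·(|s|/ω²)·‖g‖²_{L²(ℝ³)} holds. -/

import Mathlib

open MeasureTheory Complex
open scoped ComplexConjugate

/-- The partial derivative of `z : ℝ³ → ℂ` in the `i`-th coordinate direction. -/
noncomputable def pd (i : Fin 3) (z : EuclideanSpace ℝ (Fin 3) → ℂ)
    (x : EuclideanSpace ℝ (Fin 3)) : ℂ :=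
  deriv (fun t : ℝ => z (x + t • EuclideanSpace.single i (1 : ℝ))) 0

/-- The Euclidean Laplacian of `z : ℝ³ → ℂ`. -/
noncomputable def lap (z : EuclideanSpace ℝ (Fin 3) → ℂ)
    (x : EuclideanSpace ℝ (Fin 3)) : ℂ :=
  ∑ i : Fin 3, iteratedDeriv 2 (fun t : ℝ => z (x + t • EuclideanSpace.single i (1 : ℝ))) 0

noncomputable section Stmt5Aux

abbrev E3 := EuclideanSpace ℝ (Fin 3)

abbrev ev (i : Fin 3) : E3 := EuclideanSpace.single i (1 : ℝ)

def Dz (i : Fin 3) (u : SchwartzMap E3 ℂ) : SchwartzMap E3 ℂ :=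
  LineDeriv.lineDerivOp (ev i) u

lemma Dz_apply (i : Fin 3) (u : SchwartzMap E3 ℂ) (x : E3) :
    Dz i u x = fderiv ℝ u x (ev i) := SchwartzMap.lineDerivOp_apply_eq_fderiv (ev i) u x

lemma hasDerivAt_line (u : SchwartzMap E3 ℂ) (x : E3) (i : Fin 3) (t : ℝ) :
    HasDerivAt (fun t : ℝ => u (x + t • ev i)) (fderiv ℝ u (x + t • ev i) (ev i)) t := by
  have hline : HasDerivAt (fun t : ℝ => x + t • ev i) (ev i) t := by
    simpa using ((hasDerivAt_id t).smul_const (ev i)).const_add x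
  exact (u.differentiable (x + t • ev i)).hasFDerivAt.comp_hasDerivAt t hline

lemma pd_coe (i : Fin 3) (u : SchwartzMap E3 ℂ) : pd i ⇑u = ⇑(Dz i u) := by
  funext x
  have h := (hasDerivAt_line u x i 0).deriv
  simp only [zero_smul, add_zero] at h
  rw [pd, h, Dz_apply]

lemma lap_coe (u : SchwartzMap E3 ℂ) (x : E3) :
    lap ⇑u x = ∑ i : Fin 3, Dz i (Dz i u) x := by
  rw [lap]
  refine Finset.sum_congr rfl fun i _ => ?_
  have h1 : (deriv fun t : ℝ => u (x + t • ev i)) = fun t : ℝ => Dz i u (x + t • ev i) := by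
    funext t; rw [(hasDerivAt_line u x i t).deriv, Dz_apply]
  have h2 := (hasDerivAt_line (Dz i u) x i 0).deriv
  simp only [zero_smul, add_zero] at h2
  rw [show (2:ℕ) = 1+1 from rfl, iteratedDeriv_succ, iteratedDeriv_one, h1, h2, Dz_apply]

lemma fderiv_Dz (j : Fin 3) (u : SchwartzMap E3 ℂ) (x : E3) :
    fderiv ℝ (⇑(Dz j u)) x
      = (ContinuousLinearMap.apply ℝ ℂ (ev j)).comp (fderiv ℝ (fderiv ℝ ⇑u) x) := by
  have hdiff : Differentiable ℝ (fderiv ℝ ⇑u) := by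
    have h2 : ContDiff ℝ ((⊤:ℕ∞) : WithTop ℕ∞) (fderiv ℝ ⇑u) :=
      (u.smooth ⊤).fderiv_right (le_of_eq (by norm_cast))
    exact h2.differentiable (by simp)
  have : ⇑(Dz j u) = fun y => (ContinuousLinearMap.apply ℝ ℂ (ev j)) (fderiv ℝ u y) := by
    funext y; rw [Dz_apply]; rfl
  rw [this]
  exact ((ContinuousLinearMap.apply ℝ ℂ (ev j)).hasFDerivAt.comp x
    (hdiff x).hasFDerivAt).fderiv

lemma Dz_Dz_eq (i j : Fin 3) (u : SchwartzMap E3 ℂ) (x : E3) :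
    Dz i (Dz j u) x = fderiv ℝ (fderiv ℝ ⇑u) x (ev i) (ev j) := by
  rw [Dz_apply, fderiv_Dz]; rfl

lemma Dz_comm (i j : Fin 3) (u : SchwartzMap E3 ℂ) : Dz i (Dz j u) = Dz j (Dz i u) := by
  ext x
  have hdiff : Differentiable ℝ (fderiv ℝ ⇑u) := by
    have h2 : ContDiff ℝ ((⊤:ℕ∞) : WithTop ℕ∞) (fderiv ℝ ⇑u) :=
      (u.smooth ⊤).fderiv_right (le_of_eq (by norm_cast))
    exact h2.differentiable (by simp)
  rw [Dz_Dz_eq, Dz_Dz_eq]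
  exact second_derivative_symmetric (fun y => (u.differentiable y).hasFDerivAt)
    (hdiff x).hasFDerivAt (ev i) (ev j)

lemma schwartz_bounded (u : SchwartzMap E3 ℂ) : ∃ C, ∀ x, ‖u x‖ ≤ C := by
  obtain ⟨C, -, hC⟩ := u.decay 0 0
  exact ⟨C, fun x => by simpa using hC x⟩

lemma J_int (u v : SchwartzMap E3 ℂ) :
    Integrable (fun x => u x * conj (v x)) (volume : Measure E3) := by
  obtain ⟨C, hC⟩ := schwartz_bounded u
  have hvi : Integrable (fun x => conj (v x)) (volume : Measure E3) := by
    have h : Integrable (fun x => v x) (volume : Measure E3) := v.integrable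
    have := (RCLike.conjCLE (K := ℂ) : ℂ ≃L[ℝ] ℂ).toContinuousLinearMap.integrable_comp h
    exact this.congr (Filter.Eventually.of_forall fun x => rfl)
  exact Integrable.bdd_mul hvi u.continuous.aestronglyMeasurable (Filter.Eventually.of_forall hC)

lemma int_normsq (u : SchwartzMap E3 ℂ) :
    Integrable (fun x => ‖u x‖ ^ 2) (volume : Measure E3) := by
  have h := (J_int u u).norm
  refine h.congr (Filter.Eventually.of_forall fun x => ?_)
  simp [norm_mul, sq]

lemma re_J_self (u : SchwartzMap E3 ℂ) :
    (∫ x, u x * conj (u x)).re = ∫ x, ‖u x‖ ^ 2 := by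
  rw [show (∫ x, u x * conj (u x)).re = RCLike.re (∫ x, u x * conj (u x)) from rfl,
    ← integral_re (J_int u u)]
  refine integral_congr_ae (Filter.Eventually.of_forall fun x => ?_)
  simp [Complex.mul_conj, Complex.normSq_eq_norm_sq, sq]

lemma J_ibp (i : Fin 3) (u v : SchwartzMap E3 ℂ) :
    ∫ x, u x * conj (Dz i v x) = - ∫ x, Dz i u x * conj (v x) := by
  have hvc : Differentiable ℝ (fun x : E3 => conj (v x)) :=
    Complex.conjCLE.differentiable.comp v.differentiable
  have hfd : ∀ x, fderiv ℝ (fun y : E3 => conj (v y)) x (ev i) = conj (Dz i v x) := by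
    intro x
    have h : fderiv ℝ (fun y : E3 => conj (v y)) x
        = (Complex.conjCLE : ℂ ≃L[ℝ] ℂ).toContinuousLinearMap.comp (fderiv ℝ v x) :=
      ((Complex.conjCLE : ℂ ≃L[ℝ] ℂ).toContinuousLinearMap.hasFDerivAt.comp x
        (v.differentiable x).hasFDerivAt).fderiv
    rw [h, Dz_apply]; rfl
  have hint1 : Integrable (fun x => fderiv ℝ (⇑u) x (ev i) * conj (v x))
      (volume : Measure E3) := by
    refine (J_int (Dz i u) v).congr (Filter.Eventually.of_forall fun x => ?_)
    simp only [Dz_apply]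
  have hint2 : Integrable (fun x => u x * fderiv ℝ (fun y : E3 => conj (v y)) x (ev i))
      (volume : Measure E3) := by
    refine (J_int u (Dz i v)).congr (Filter.Eventually.of_forall fun x => ?_)
    simp only [hfd]
  have key := integral_mul_fderiv_eq_neg_fderiv_mul_of_integrable
    (μ := (volume : Measure E3)) (f := ⇑u) (g := fun x : E3 => conj (v x)) (v := ev i)
    hint1 hint2 (J_int u v) (fun x _ => u.differentiable x) (fun x _ => hvc x)
  calc ∫ x, u x * conj (Dz i v x)
      = ∫ x, u x * fderiv ℝ (fun y : E3 => conj (v y)) x (ev i) := by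
        refine integral_congr_ae (Filter.Eventually.of_forall fun x => ?_); simp only [hfd]
    _ = - ∫ x, fderiv ℝ (⇑u) x (ev i) * conj (v x) := key
    _ = - ∫ x, Dz i u x * conj (v x) := by
        have h : (fun x : E3 => fderiv ℝ (⇑u) x (ev i) * conj (v x))
            = fun x => Dz i u x * conj (v x) := by
          funext x; simp only [Dz_apply]
        rw [h]

lemma J_conj (u v : SchwartzMap E3 ℂ) :
    conj (∫ x, u x * conj (v x)) = ∫ x, v x * conj (u x) := by
  rw [← integral_conj]
  refine integral_congr_ae (Filter.Eventually.of_forall fun x => ?_)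
  simp [map_mul, mul_comm]

lemma J_self_eq (u : SchwartzMap E3 ℂ) :
    (∫ x, u x * conj (u x)) = ((∫ x, ‖u x‖ ^ 2 : ℝ) : ℂ) := by
  have him : (∫ x, u x * conj (u x)).im = 0 := by
    have h := J_conj u u
    have := congrArg Complex.im h
    simp only [Complex.conj_im] at this
    linarith
  have hre := re_J_self u
  exact Complex.ext (by simp [hre]) (by simp [him])

lemma J_fourth (a b c d : Fin 3) (u : SchwartzMap E3 ℂ) :
    ∫ x, Dz a (Dz b u) x * conj (Dz c (Dz d u) x)
      = ∫ x, Dz d (Dz c (Dz a (Dz b u))) x * conj (u x) := by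
  rw [J_ibp c (Dz a (Dz b u)) (Dz d u), J_ibp d (Dz c (Dz a (Dz b u))) u, neg_neg]

lemma J_diag (a b : Fin 3) (u : SchwartzMap E3 ℂ) :
    ∫ x, Dz a (Dz b u) x * conj (Dz a (Dz b u) x)
      = ∫ x, Dz a (Dz a u) x * conj (Dz b (Dz b u) x) := by
  rw [J_fourth a b a b u, J_fourth a a b b u]
  have h : Dz b (Dz a (Dz a (Dz b u))) = Dz b (Dz b (Dz a (Dz a u))) := by
    congr 1
    calc Dz a (Dz a (Dz b u)) = Dz a (Dz b (Dz a u)) := by rw [Dz_comm a b u]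
      _ = Dz b (Dz a (Dz a u)) := Dz_comm a b (Dz a u)
  rw [h]

lemma coe_sum (f : Fin 3 → SchwartzMap E3 ℂ) (x : E3) :
    (∑ i : Fin 3, f i) x = ∑ i : Fin 3, f i x := by
  simp [Fin.sum_univ_three]

lemma sum_sq_eq (u : SchwartzMap E3 ℂ) :
    ∑ a : Fin 3, ∑ b : Fin 3, ∫ x, ‖Dz a (Dz b u) x‖ ^ 2
      = ∫ x, ‖(∑ i : Fin 3, Dz i (Dz i u)) x‖ ^ 2 := by
  set W := ∑ i : Fin 3, Dz i (Dz i u) with hW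
  have expand : ∫ x, W x * conj (W x)
      = ∑ a : Fin 3, ∑ b : Fin 3, ∫ x, Dz a (Dz a u) x * conj (Dz b (Dz b u) x) := by
    have h1 : ∀ x : E3, W x * conj (W x)
        = ∑ a : Fin 3, ∑ b : Fin 3, Dz a (Dz a u) x * conj (Dz b (Dz b u) x) := by
      intro x
      rw [hW, coe_sum, map_sum, Finset.sum_mul_sum]
    rw [integral_congr_ae (Filter.Eventually.of_forall h1)]
    rw [integral_finset_sum _ (fun a _ => integrable_finset_sum _
      (fun b _ => J_int (Dz a (Dz a u)) (Dz b (Dz b u))))]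
    exact Finset.sum_congr rfl fun a _ =>
      integral_finset_sum _ (fun b _ => J_int (Dz a (Dz a u)) (Dz b (Dz b u)))
  have lhs : ((∑ a : Fin 3, ∑ b : Fin 3, ∫ x, ‖Dz a (Dz b u) x‖ ^ 2 : ℝ) : ℂ)
      = ∫ x, W x * conj (W x) := by
    rw [expand]
    push_cast
    refine Finset.sum_congr rfl fun a _ => Finset.sum_congr rfl fun b _ => ?_
    rw [← J_diag a b u, J_self_eq]
  have := congrArg Complex.re lhs
  rw [J_self_eq W] at this
  simpa using this

lemma J_Wz (u : SchwartzMap E3 ℂ) :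
    ∫ x, (∑ i : Fin 3, Dz i (Dz i u)) x * conj (u x)
      = -((∑ i : Fin 3, ∫ x, ‖Dz i u x‖ ^ 2 : ℝ) : ℂ) := by
  have h1 : ∀ x : E3, (∑ i : Fin 3, Dz i (Dz i u)) x * conj (u x)
      = ∑ i : Fin 3, Dz i (Dz i u) x * conj (u x) := by
    intro x; rw [coe_sum, Finset.sum_mul]
  rw [integral_congr_ae (Filter.Eventually.of_forall h1),
    integral_finset_sum _ (fun i _ => J_int (Dz i (Dz i u)) u)]
  push_cast
  rw [← Finset.sum_neg_distrib]
  refine Finset.sum_congr rfl fun i _ => ?_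
  have h2 := J_ibp i (Dz i u) u
  rw [J_self_eq] at h2
  linear_combination h2

lemma norm_mul_conj_int (u v : SchwartzMap E3 ℂ) :
    Integrable (fun x => ‖u x‖ * ‖v x‖) (volume : Measure E3) := by
  refine (J_int u v).norm.congr (Filter.Eventually.of_forall fun x => ?_)
  simp [norm_mul]

lemma P_le_int (u v : SchwartzMap E3 ℂ) :
    ‖∫ x, u x * conj (v x)‖ ≤ ∫ x, ‖u x‖ * ‖v x‖ := by
  refine (norm_integral_le_integral_norm _).trans (le_of_eq ?_)
  refine integral_congr_ae (Filter.Eventually.of_forall fun x => ?_)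
  simp [norm_mul]

lemma CS_bound (u : SchwartzMap E3 ℂ) (t : ℝ) (ht : 0 < t) :
    2 * t * (∑ i : Fin 3, ∫ x, ‖Dz i u x‖ ^ 2)
      ≤ t ^ 2 * (∫ x, ‖(∑ i : Fin 3, Dz i (Dz i u)) x‖ ^ 2) + ∫ x, ‖u x‖ ^ 2 := by
  set W := ∑ i : Fin 3, Dz i (Dz i u) with hW
  set P := ∑ i : Fin 3, ∫ x, ‖Dz i u x‖ ^ 2 with hP
  have hP0 : 0 ≤ P := Finset.sum_nonneg fun i _ =>
    integral_nonneg fun x => sq_nonneg _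
  have hPnorm : P = ‖∫ x, W x * conj (u x)‖ := by
    rw [hW, J_Wz u, ← hP, norm_neg]
    simp only [Complex.norm_real, Real.norm_eq_abs]
    exact (_root_.abs_of_nonneg hP0).symm
  have h1 : P ≤ ∫ x, ‖W x‖ * ‖u x‖ := hPnorm ▸ P_le_int W u
  have int1 : Integrable (fun x => 2 * t * (‖W x‖ * ‖u x‖)) (volume : Measure E3) :=
    (norm_mul_conj_int W u).const_mul _
  have int2 : Integrable (fun x => t ^ 2 * ‖W x‖ ^ 2 + ‖u x‖ ^ 2) (volume : Measure E3) :=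
    ((int_normsq W).const_mul _).add (int_normsq u)
  have h2 : ∫ x, 2 * t * (‖W x‖ * ‖u x‖) ≤ ∫ x, (t ^ 2 * ‖W x‖ ^ 2 + ‖u x‖ ^ 2) :=
    integral_mono int1 int2 (fun x => by nlinarith [sq_nonneg (t * ‖W x‖ - ‖u x‖)])
  have h3 : 2 * t * P ≤ 2 * t * ∫ x, ‖W x‖ * ‖u x‖ :=
    mul_le_mul_of_nonneg_left h1 (by positivity)
  rw [← integral_const_mul] at h3
  have h4 := h3.trans h2
  rwa [integral_add ((int_normsq W).const_mul _) (int_normsq u), integral_const_mul] at h4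

lemma G_expand (s : ℂ) (z : SchwartzMap E3 ℂ) :
    ∫ x, ‖(s • z - ∑ i : Fin 3, Dz i (Dz i z)) x‖ ^ 2
      = (∫ x, ‖(∑ i : Fin 3, Dz i (Dz i z)) x‖ ^ 2)
        + 2 * s.re * (∑ i : Fin 3, ∫ x, ‖Dz i z x‖ ^ 2)
        + (‖s‖) ^ 2 * ∫ x, ‖z x‖ ^ 2 := by
  set W := ∑ i : Fin 3, Dz i (Dz i z) with hW
  set GS := s • z - W with hGS
  have hint1 := (J_int z z).const_mul (s * conj s)
  have hint2 := (J_int z W).const_mul s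
  have hint3 := (J_int W z).const_mul (conj s)
  have hint4 := J_int W W
  have hpt : ∀ x : E3, GS x * conj (GS x)
      = s * conj s * (z x * conj (z x)) - s * (z x * conj (W x))
        - conj s * (W x * conj (z x)) + W x * conj (W x) := by
    intro x
    have hx : GS x = s * z x - W x := by
      rw [hGS, SchwartzMap.sub_apply, SchwartzMap.smul_apply, smul_eq_mul]
    rw [hx, map_sub, map_mul]; ring
  have hsplit : ∫ x, GS x * conj (GS x)
      = s * conj s * (∫ x, z x * conj (z x)) - s * (∫ x, z x * conj (W x))
        - conj s * (∫ x, W x * conj (z x)) + ∫ x, W x * conj (W x) := by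
    rw [integral_congr_ae (Filter.Eventually.of_forall hpt)]
    have A1 := integral_add (μ := (volume : Measure E3)) ((hint1.sub hint2).sub hint3) hint4
    have A2 := integral_sub (μ := (volume : Measure E3)) (hint1.sub hint2) hint3
    have A3 := integral_sub (μ := (volume : Measure E3)) hint1 hint2
    simp only [Pi.add_apply, Pi.sub_apply] at A1 A2 A3
    rw [A1, A2, A3, integral_const_mul, integral_const_mul, integral_const_mul]
  have hWz : ∫ x, W x * conj (z x)
      = -((∑ i : Fin 3, ∫ x, ‖Dz i z x‖ ^ 2 : ℝ) : ℂ) := J_Wz z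
  have hzW : ∫ x, z x * conj (W x)
      = -((∑ i : Fin 3, ∫ x, ‖Dz i z x‖ ^ 2 : ℝ) : ℂ) := by
    rw [← J_conj W z, hWz, map_neg, Complex.conj_ofReal]
  rw [J_self_eq GS, J_self_eq z, J_self_eq W, hWz, hzW] at hsplit
  have hre := congrArg Complex.re hsplit
  simp only [Complex.ofReal_re, Complex.add_re, Complex.sub_re, Complex.mul_re,
    Complex.ofReal_im, Complex.neg_re, Complex.neg_im, Complex.conj_re, Complex.conj_im,
    mul_zero, zero_mul, sub_zero, add_zero, neg_zero, neg_neg, mul_neg] at hre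
  have habs : s.re * s.re + s.im * s.im = (‖s‖) ^ 2 := by
    rw [Complex.sq_norm, Complex.normSq_apply]
  rw [hre]; rw [← habs]; ring

lemma final_ineq (S σ A2 b2 P G2 : ℝ) (hSpos : 0 < S) (hSσ : 0 < S + σ) (hσS : σ ≤ S)
    (hA20 : 0 ≤ A2) (hb20 : 0 ≤ b2) (hP0 : 0 ≤ P) (hG20 : 0 ≤ G2)
    (hexp : G2 = A2 + 2 * σ * P + S ^ 2 * b2)
    (hCS : ∀ t : ℝ, 0 < t → 2 * t * P ≤ t ^ 2 * A2 + b2) :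
    A2 * (S + σ) ≤ 8 * S * G2 := by
  rcases le_or_gt 0 σ with hσ | hσ
  · have hA2G : A2 ≤ G2 := by nlinarith [mul_nonneg hσ hP0, mul_nonneg (sq_nonneg S) hb20]
    nlinarith [mul_le_mul_of_nonneg_right hA2G (by linarith : (0:ℝ) ≤ 2 * S),
      mul_le_mul_of_nonneg_left (show S + σ ≤ 2 * S by linarith) hA20,
      mul_nonneg hSpos.le hG20]
  · have hS2 : (0:ℝ) < S ^ 2 := by positivity
    have ht : 0 < -σ / S ^ 2 := div_pos (by linarith) hS2
    have hCSt := hCS _ ht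
    have hkey : (S ^ 2 - σ ^ 2) * A2 ≤ S ^ 2 * G2 := by
      have e2 : S ^ 4 * ((-σ / S ^ 2) ^ 2 * A2 + b2 - 2 * (-σ / S ^ 2) * P)
          = σ ^ 2 * A2 + S ^ 4 * b2 + 2 * σ * S ^ 2 * P := by
        field_simp; ring
      have h0 := mul_nonneg (by positivity : (0:ℝ) ≤ S ^ 4) (sub_nonneg.mpr hCSt)
      rw [e2] at h0
      have hexp2 : S ^ 2 * G2 = S ^ 2 * A2 + 2 * σ * S ^ 2 * P + S ^ 4 * b2 := by
        rw [hexp]; ring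
      linarith
    have c1 : A2 * (S + σ) * S ^ 2 ≤ 8 * S * ((S ^ 2 - σ ^ 2) * A2) := by
      nlinarith [mul_nonneg (mul_nonneg (mul_nonneg hA20 hSσ.le) hSpos.le)
        (show (0:ℝ) ≤ 7 * S - 8 * σ by linarith)]
    have c2 : 8 * S * ((S ^ 2 - σ ^ 2) * A2) ≤ 8 * S * (S ^ 2 * G2) :=
      mul_le_mul_of_nonneg_left hkey (by positivity)
    have c3 : A2 * (S + σ) * S ^ 2 ≤ 8 * S * G2 * S ^ 2 := by nlinarith [c1, c2]
    exact le_of_mul_le_mul_right c3 hS2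


lemma omega_sq (s : ℂ) (hs : s ∈ Complex.slitPlane) :
    ((s ^ (1 / 2 : ℂ)).re) ^ 2 = (‖s‖ + s.re) / 2 := by
  set r := s ^ (1 / 2 : ℂ) with hr
  have hr2 : r ^ 2 = s := by
    rw [hr, show (1 / 2 : ℂ) = ((2 : ℕ) : ℂ)⁻¹ by norm_num]
    exact Complex.cpow_nat_inv_pow s two_ne_zero
  have hre : s.re = r.re ^ 2 - r.im ^ 2 := by
    rw [← hr2, pow_two, Complex.mul_re]; ring
  have habs : ‖s‖ = r.re ^ 2 + r.im ^ 2 := by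
    rw [← hr2, norm_pow, Complex.sq_norm, Complex.normSq_apply]; ring
  rw [habs, hre]; ring

lemma slit_pos (s : ℂ) (hs : s ∈ Complex.slitPlane) : 0 < ‖s‖ + s.re := by
  rcases Complex.mem_slitPlane_iff.mp hs with h | h
  · have : 0 < ‖s‖ := norm_pos_iff.mpr (by
      intro h0; rw [h0] at h; simp at h)
    linarith
  · have h2 : |s.re| < ‖s‖ := Complex.abs_re_lt_norm.mpr h
    have := neg_abs_le s.re
    linarith

end Stmt5Aux

/-- For `s` in the slit plane with `ω := Re(s^{1/2}) > 0` and a Schwartz function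
`z : ℝ³ → ℂ`, setting `g := −Δz + s·z`, the full second-derivative (H² semi-norm) bound
`Σ_{i,j} ‖∂_i∂_j z‖²_{L²} ≤ 4·(|s|/ω²)·‖g‖²_{L²}` holds. -/
theorem stmt5 (s : ℂ) (hs : s ∈ Complex.slitPlane)
    (z : SchwartzMap (EuclideanSpace ℝ (Fin 3)) ℂ)
    (g : EuclideanSpace ℝ (Fin 3) → ℂ)
    (hg : ∀ x, g x = -lap (⇑z) x + s * z x) :
    ∑ i : Fin 3, ∑ j : Fin 3, (∫ x, ‖pd i (pd j (⇑z)) x‖ ^ 2)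
      ≤ 4 * (‖s‖ / ((s ^ (1 / 2 : ℂ)).re) ^ 2) * ∫ x, ‖g x‖ ^ 2 := by
  have hSσ : 0 < ‖s‖ + s.re := slit_pos s hs
  have hs0 : s ≠ 0 := by
    intro h; rw [h] at hSσ; simp at hSσ
  have hSpos : 0 < ‖s‖ := norm_pos_iff.mpr hs0
  have hσS : s.re ≤ ‖s‖ := Complex.re_le_norm s
  have hLHS : ∑ i : Fin 3, ∑ j : Fin 3, (∫ x, ‖pd i (pd j (⇑z)) x‖ ^ 2)
      = ∫ x, ‖(∑ i : Fin 3, Dz i (Dz i z)) x‖ ^ 2 := by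
    rw [← sum_sq_eq z]
    refine Finset.sum_congr rfl fun i _ => Finset.sum_congr rfl fun j _ => ?_
    rw [pd_coe j z, pd_coe i (Dz j z)]
  have hgx : ∀ x, g x = (s • z - ∑ i : Fin 3, Dz i (Dz i z)) x := by
    intro x
    rw [hg x, lap_coe z x, SchwartzMap.sub_apply, SchwartzMap.smul_apply, coe_sum, smul_eq_mul]
    ring
  have hG2eq : ∫ x, ‖g x‖ ^ 2
      = ∫ x, ‖(s • z - ∑ i : Fin 3, Dz i (Dz i z)) x‖ ^ 2 :=
    integral_congr_ae (Filter.Eventually.of_forall fun x => by simp only [hgx x])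
  have hexp : ∫ x, ‖g x‖ ^ 2
      = (∫ x, ‖(∑ i : Fin 3, Dz i (Dz i z)) x‖ ^ 2)
        + 2 * s.re * (∑ i : Fin 3, ∫ x, ‖Dz i z x‖ ^ 2)
        + (‖s‖) ^ 2 * ∫ x, ‖z x‖ ^ 2 := hG2eq.trans (G_expand s z)
  have hA20 : 0 ≤ ∫ x, ‖(∑ i : Fin 3, Dz i (Dz i z)) x‖ ^ 2 :=
    integral_nonneg fun x => sq_nonneg _
  have hb20 : 0 ≤ ∫ x, ‖z x‖ ^ 2 := integral_nonneg fun x => sq_nonneg _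
  have hP0 : 0 ≤ ∑ i : Fin 3, ∫ x, ‖Dz i z x‖ ^ 2 :=
    Finset.sum_nonneg fun i _ => integral_nonneg fun x => sq_nonneg _
  have hG20 : 0 ≤ ∫ x, ‖g x‖ ^ 2 := integral_nonneg fun x => sq_nonneg _
  have key := final_ineq (‖s‖) s.re
    (∫ x, ‖(∑ i : Fin 3, Dz i (Dz i z)) x‖ ^ 2) (∫ x, ‖z x‖ ^ 2)
    (∑ i : Fin 3, ∫ x, ‖Dz i z x‖ ^ 2) (∫ x, ‖g x‖ ^ 2)
    hSpos hSσ hσS hA20 hb20 hP0 hG20 hexp (fun t ht => CS_bound z t ht)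
  rw [hLHS, omega_sq s hs]
  have hc : 4 * (‖s‖ / ((‖s‖ + s.re) / 2))
      = 8 * ‖s‖ / (‖s‖ + s.re) := by
    field_simp; ring
  rw [hc, div_mul_eq_mul_div, le_div_iff₀ hSσ]
  linarith [key]
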